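/- Let $S = K[X_1,\ldots,X_n]$ over a perfect field $K$ of characteristic $p>0$, $f \in S$, and $I \subset S$ an ideal. Then $\mathrm{Tr}(fI) \subseteq I$ (i.e., $I$ is compatibly split with respect to $f \star \mathrm{Tr}$) if and only if $f \in I^{[p]} : I$, where $I^{[p]} = (x^p : x \in I)$. -/

import Mathlib

open MvPolynomial
open scoped Classical

/-- The trace map `Tr : F_*S → S`, the projection onto the basis element
`X_1^{p-1} ⋯ X_n^{p-1}` of the monomial basis of `F_*S` over `S`. -/
noncomputable def Tr (n p : ℕ) [Fact p.Prime] (K : Type) [Field K] [CharP K p]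
    [PerfectRing K p] (g : MvPolynomial (Fin n) K) : MvPolynomial (Fin n) K :=
  ∑ u ∈ g.support,
    if (∀ j, u j % p = p - 1) then
      monomial
        (u.mapRange (fun a => (a + 1) / p - 1)
          (by simp [Nat.div_eq_of_lt (Fact.out : p.Prime).one_lt]))
        ((frobeniusEquiv K p).symm (coeff u g))
    else 0

/-- The Frobenius power `I^{[p]}`: the ideal generated by `p`-th powers of elements of `I`. -/
def frobPow {R : Type} [CommRing R] (I : Ideal R) (p : ℕ) : Ideal R :=
  Ideal.span ((fun x => x ^ p) '' (I : Set R))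

section Aux

variable (n p : ℕ) [Fact p.Prime] (K : Type) [Field K] [CharP K p] [PerfectRing K p]

/-- multiply by `p` and add `p-1` in each coordinate. -/
noncomputable def shiftF (v : Fin n →₀ ℕ) : Fin n →₀ ℕ :=
  Finsupp.equivFunOnFinite.symm (fun j => p * v j + (p - 1))

@[simp] lemma shiftF_apply (v : Fin n →₀ ℕ) (j : Fin n) :
    shiftF n p v j = p * v j + (p - 1) := by
  simp [shiftF]

/-- divide by `p` in each coordinate. -/
noncomputable def psiF (e : Fin n →₀ ℕ) : Fin n →₀ ℕ :=
  Finsupp.equivFunOnFinite.symm (fun j => e j / p)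

@[simp] lemma psiF_apply (e : Fin n →₀ ℕ) (j : Fin n) : psiF n p e j = e j / p := by
  simp [psiF]

lemma shiftF_mod (v : Fin n →₀ ℕ) (j : Fin n) : (shiftF n p v) j % p = p - 1 := by
  have hp : p.Prime := Fact.out
  rw [shiftF_apply, Nat.mul_add_mod, Nat.mod_eq_of_lt (Nat.sub_lt hp.pos one_pos)]

lemma coeff_Tr (g : MvPolynomial (Fin n) K) (v : Fin n →₀ ℕ) :
    coeff v (Tr n p K g) = (frobeniusEquiv K p).symm (coeff (shiftF n p v) g) := by
  have hp : p.Prime := Fact.out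
  have hp0 : 0 < p := hp.pos
  rw [Tr, coeff_sum]
  have key : ∀ u ∈ g.support,
      (coeff v (if (∀ j, u j % p = p - 1) then
        monomial (u.mapRange (fun a => (a + 1) / p - 1)
          (by simp [Nat.div_eq_of_lt (Fact.out : p.Prime).one_lt]))
          ((frobeniusEquiv K p).symm (coeff u g)) else 0))
      = if u = shiftF n p v then (frobeniusEquiv K p).symm (coeff (shiftF n p v) g) else 0 := by
    intro u _
    by_cases hcond : ∀ j, u j % p = p - 1
    · rw [if_pos hcond, coeff_monomial]
      have hiff : (u.mapRange (fun a => (a + 1) / p - 1)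
          (by simp [Nat.div_eq_of_lt (Fact.out : p.Prime).one_lt]) = v) ↔ u = shiftF n p v := by
        constructor
        · intro hψ
          ext j
          have hj : u j % p = p - 1 := hcond j
          have h1 : u j = p * (u j / p) + (p - 1) := by
            conv_lhs => rw [← Nat.div_add_mod (u j) p]
            rw [hj]
          have h2 : (u j + 1) / p = u j / p + 1 := by
            rw [show u j + 1 = p * (u j / p + 1) by rw [Nat.mul_add, mul_one]; omega,
              Nat.mul_div_cancel_left _ hp0]
          have h3 : v j = u j / p := by
            rw [← hψ, Finsupp.mapRange_apply, h2, Nat.add_sub_cancel]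
          rw [shiftF_apply, h3]
          omega
        · rintro rfl
          ext j
          rw [Finsupp.mapRange_apply, shiftF_apply,
            show p * v j + (p - 1) + 1 = p * (v j + 1) by rw [Nat.mul_add, mul_one]; omega,
            Nat.mul_div_cancel_left _ hp0, Nat.add_sub_cancel]
      by_cases h : u = shiftF n p v
      · rw [if_pos (hiff.mpr h), if_pos h, h]
      · rw [if_neg (fun hc => h (hiff.mp hc)), if_neg h]
    · rw [if_neg hcond, coeff_zero, if_neg]
      intro heq
      exact hcond (fun j => heq ▸ shiftF_mod n p v j)
  rw [Finset.sum_congr rfl key, Finset.sum_ite_eq' g.support (shiftF n p v)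
    (fun _ => (frobeniusEquiv K p).symm (coeff (shiftF n p v) g))]
  split_ifs with h
  · rfl
  · rw [notMem_support_iff.mp h, map_zero]



lemma Tr_add (g h : MvPolynomial (Fin n) K) :
    Tr n p K (g + h) = Tr n p K g + Tr n p K h := by
  ext v
  simp [coeff_Tr, map_add]

lemma Tr_zero : Tr n p K 0 = 0 := by
  ext v
  simp [coeff_Tr]

lemma Tr_monomial (e : Fin n →₀ ℕ) (c : K) :
    Tr n p K (monomial e c) =
      if (∀ j, e j % p = p - 1) then monomial (psiF n p e) ((frobeniusEquiv K p).symm c)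
      else 0 := by
  have hp : p.Prime := Fact.out
  have hp0 : 0 < p := hp.pos
  ext v
  rw [coeff_Tr, coeff_monomial]
  by_cases hcond : ∀ j, e j % p = p - 1
  · rw [if_pos hcond, coeff_monomial]
    have hiff : (e = shiftF n p v) ↔ psiF n p e = v := by
      constructor
      · rintro rfl
        ext j
        rw [psiF_apply, shiftF_apply, Nat.mul_add_div hp0,
          Nat.div_eq_of_lt (Nat.sub_lt hp0 one_pos), Nat.add_zero]
      · rintro rfl
        ext j
        have h1 : e j = p * (e j / p) + (p - 1) := by
          conv_lhs => rw [← Nat.div_add_mod (e j) p]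
          rw [hcond j]
        rw [shiftF_apply, psiF_apply]
        omega
    by_cases h : e = shiftF n p v
    · rw [if_pos h, if_pos (hiff.mp h)]
    · rw [if_neg h, if_neg (fun hc => h (hiff.mpr hc)), map_zero]
  · rw [if_neg hcond, coeff_zero, if_neg, map_zero]
    intro heq
    exact hcond (fun j => heq ▸ shiftF_mod n p v j)

lemma Tr_pow_mul (a s : MvPolynomial (Fin n) K) :
    Tr n p K (a ^ p * s) = a * Tr n p K s := by
  have hp : p.Prime := Fact.out
  have hp0 : 0 < p := hp.pos
  induction a using MvPolynomial.induction_on' with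
  | add x y hx hy =>
    rw [add_pow_char, add_mul, Tr_add, hx, hy, add_mul]
  | monomial w c =>
    ext v
    rw [coeff_Tr, monomial_pow, coeff_monomial_mul', coeff_monomial_mul', coeff_Tr]
    have hle : (p • w ≤ shiftF n p v) ↔ w ≤ v := by
      rw [Finsupp.le_def, Finsupp.le_def]
      constructor <;> intro h j <;> have hj := h j <;>
        simp only [Finsupp.smul_apply, smul_eq_mul, shiftF_apply] at *
      · by_contra hc
        push_neg at hc
        have : v j + 1 ≤ w j := hc
        have h2 : p * (v j + 1) ≤ p * w j := Nat.mul_le_mul_left p this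
        rw [Nat.mul_add, mul_one] at h2
        omega
      · have := Nat.mul_le_mul_left p hj
        omega
    by_cases h : w ≤ v
    · rw [if_pos (hle.mpr h), if_pos h]
      have hsub : shiftF n p v - p • w = shiftF n p (v - w) := by
        ext j
        have hj : w j ≤ v j := (Finsupp.le_def.mp h) j
        have h2 : p * w j ≤ p * v j := Nat.mul_le_mul_left p hj
        simp only [Finsupp.tsub_apply, Finsupp.smul_apply, smul_eq_mul, shiftF_apply]
        rw [Nat.mul_sub]
        omega
      rw [hsub, map_mul, ← frobenius_def, frobeniusEquiv_symm_apply_frobenius]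
    · rw [if_neg (fun hc => h (hle.mp hc)), if_neg h, map_zero]



lemma mod_aux (hp0 : 0 < p) (k r : ℕ) (hk : k < p) (hr : r < p) :
    (p - 1 - k + r) % p = p - 1 ↔ r = k := by
  constructor
  · intro h
    rcases lt_trichotomy r k with hlt | heq | hgt
    · rw [Nat.mod_eq_of_lt (by omega)] at h; omega
    · exact heq
    · rw [show p - 1 - k + r = p + (r - k - 1) by omega, Nat.add_mod_left,
        Nat.mod_eq_of_lt (by omega)] at h
      omega
  · rintro rfl
    rw [Nat.mod_eq_of_lt (by omega)]
    omega

/-- monomial with exponents `u`. -/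
noncomputable def umon (u : Fin n → Fin p) : Fin n →₀ ℕ :=
  Finsupp.equivFunOnFinite.symm (fun j => (u j : ℕ))

@[simp] lemma umon_apply (u : Fin n → Fin p) (j : Fin n) : umon n p u j = (u j : ℕ) := by
  simp [umon]

/-- complementary exponents `p - 1 - u`. -/
noncomputable def cmon (u : Fin n → Fin p) : Fin n →₀ ℕ :=
  Finsupp.equivFunOnFinite.symm (fun j => p - 1 - (u j : ℕ))

@[simp] lemma cmon_apply (u : Fin n → Fin p) (j : Fin n) : cmon n p u j = p - 1 - (u j : ℕ) := by
  simp [cmon]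

lemma recon (h : MvPolynomial (Fin n) K) :
    ∑ u : Fin n → Fin p,
      (Tr n p K (monomial (cmon n p u) 1 * h)) ^ p * monomial (umon n p u) 1 = h := by
  have hp : p.Prime := Fact.out
  have hp0 : 0 < p := hp.pos
  induction h using MvPolynomial.induction_on' with
  | add x y hx hy =>
    simp_rw [mul_add, Tr_add, add_pow_char, add_mul, Finset.sum_add_distrib, hx, hy]
  | monomial d c =>
    have hdlt : ∀ j : Fin n, d j % p < p := fun j => Nat.mod_lt _ hp0
    set u₀ : Fin n → Fin p := fun j => ⟨d j % p, hdlt j⟩ with hu₀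
    have hsum : ∀ j, (cmon n p u₀ + d) j = p * (d j / p) + (p - 1) := by
      intro j
      have h2 := Nat.div_add_mod (d j) p
      have h3 := hdlt j
      simp only [Finsupp.add_apply, cmon_apply, hu₀]
      omega
    rw [Finset.sum_eq_single u₀]
    · rw [monomial_mul, one_mul, Tr_monomial, if_pos, monomial_pow, monomial_mul, mul_one]
      · have hexp : p • psiF n p (cmon n p u₀ + d) + umon n p u₀ = d := by
          ext j
          have h2 := Nat.div_add_mod (d j) p
          simp only [Finsupp.add_apply, Finsupp.smul_apply, smul_eq_mul, psiF_apply, umon_apply,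
            hsum j, Nat.mul_add_div hp0, Nat.div_eq_of_lt (show p - 1 < p by omega),
            Nat.add_zero]
          exact h2
        rw [hexp, frobeniusEquiv_symm_pow_p]
      · intro j
        rw [hsum j, Nat.mul_add_mod, Nat.mod_eq_of_lt (by omega)]
    · intro b _ hb
      rw [monomial_mul, one_mul, Tr_monomial, if_neg, zero_pow hp.ne_zero, zero_mul]
      intro hc
      apply hb
      funext j
      have hj := hc j
      simp only [Finsupp.add_apply, cmon_apply] at hj
      have := (mod_aux p hp0 (b j : ℕ) (d j % p) (b j).isLt (hdlt j)).mp ?_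
      · exact Fin.ext (by simp [hu₀, this.symm])
      · have h1 : p - 1 - (b j : ℕ) + d j = p * (d j / p) + (p - 1 - (b j : ℕ) + d j % p) := by
          have := Nat.div_add_mod (d j) p
          omega
        rwa [h1, Nat.mul_add_mod] at hj
    · intro hu
      exact absurd (Finset.mem_univ u₀) hu

lemma Tr_frobPow_mem (I : Ideal (MvPolynomial (Fin n) K)) (h : MvPolynomial (Fin n) K)
    (hh : h ∈ frobPow I p) (s : MvPolynomial (Fin n) K) : Tr n p K (s * h) ∈ I := by
  rw [frobPow] at hh
  refine Submodule.span_induction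
    (p := fun x _ => ∀ s, Tr n p K (s * x) ∈ I) ?_ ?_ ?_ ?_ hh s
  · rintro x ⟨a, ha, rfl⟩ t
    rw [mul_comm, Tr_pow_mul]
    exact Ideal.mul_mem_right _ _ ha
  · intro t
    rw [mul_zero, Tr_zero]
    exact I.zero_mem
  · intro x y _ _ hx hy t
    rw [mul_add, Tr_add]
    exact I.add_mem (hx t) (hy t)
  · intro a x _ hx t
    rw [smul_eq_mul, ← mul_assoc]
    exact hx (t * a)

end Aux

/-- Fedder's criterion for compatibility. For `f ∈ S = K[X_1,…,X_n]`
(`K` perfect of characteristic `p`) and an ideal `I ⊆ S`: `Tr(f·I) ⊆ I` (i.e. `I` is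
compatibly split with respect to `f ⋆ Tr`) if and only if `f ∈ I^{[p]} : I`. -/
theorem stmt6 (n p : ℕ) [Fact p.Prime] (K : Type) [Field K] [CharP K p] [PerfectRing K p]
    (f : MvPolynomial (Fin n) K) (I : Ideal (MvPolynomial (Fin n) K)) :
    (∀ g ∈ I, Tr n p K (f * g) ∈ I) ↔ f ∈ Submodule.colon (frobPow I p) I := by
  rw [Submodule.mem_colon]
  constructor
  · intro H g hg
    rw [smul_eq_mul, ← recon n p K (f * g)]
    refine Ideal.sum_mem _ fun u _ => ?_
    refine Ideal.mul_mem_right _ _ ?_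
    refine Ideal.subset_span ⟨Tr n p K (monomial (cmon n p u) 1 * (f * g)), ?_, rfl⟩
    rw [show monomial (cmon n p u) 1 * (f * g) = f * (monomial (cmon n p u) 1 * g) by ring]
    exact H _ (Ideal.mul_mem_left _ _ hg)
  · intro H g hg
    have := Tr_frobPow_mem n p K I (f * g) (by rw [← smul_eq_mul]; exact H g hg) 1
    rwa [one_mul] at this
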